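/- Let A be a group acting on a set Z, let T be a commutative group, and let q : A → T be a group homomorphism such that every element of the kernel of q has at least one fixed point in Z. Then for every finitely generated subgroup Π ≤ A there exists a subgroup Γ ≤ Π of finite index in Π with the following property: every finite subgroup H ≤ Γ that acts freely on Z (i.e. for every h ∈ H with h ≠ 1 and every z ∈ Z one has h • z ≠ z) is the trivial subgroup. -/

import Mathlib

/-- Let `A` be a group acting on a set `Z`, `T` a commutative group and `q : A →* T` a
homomorphism such that every element of `ker q` has a fixed point in `Z`.  Then every finitely
generated subgroup `P ≤ A` contains a subgroup `Γ` of finite index in `P` such that every finite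
subgroup of `Γ` acting freely on `Z` is trivial. -/
theorem exists_finiteIndex_subgroup_no_free_finite_subgroups
    {A T Z : Type*} [Group A] [CommGroup T] [MulAction A Z]
    (q : A →* T) (hq : ∀ a ∈ q.ker, ∃ z : Z, a • z = z)
    (P : Subgroup A) (hP : Group.FG P) :
    ∃ Γ : Subgroup A, Γ ≤ P ∧ Γ.relIndex P ≠ 0 ∧
      ∀ H : Subgroup A, H ≤ Γ → Finite H →
        (∀ h ∈ H, h ≠ 1 → ∀ z : Z, h • z ≠ z) → H = ⊥ := by
  classical
  -- the image of `P` under `q`, a finitely generated abelian group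
  set Q : Subgroup T := P.map q with hQ
  -- restriction of `q` to a surjective hom `P →* Q`
  let r : ↥P →* ↥Q := (q.comp P.subtype).codRestrict Q
    (fun p => ⟨p.1, p.2, rfl⟩)
  have hr_surj : Function.Surjective r := by
    rintro ⟨t, a, ha, rfl⟩
    exact ⟨⟨a, ha⟩, rfl⟩
  haveI : Group.FG ↥P := hP
  haveI : Group.FG ↥Q := Group.fg_of_surjective hr_surj
  haveI : AddGroup.FG (Additive ↥Q) := GroupFG.iff_add_fg.mp ‹_›
  obtain ⟨n, ι, fι, p, hp, e, ⟨f⟩⟩ :=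
    AddCommGroup.equiv_free_prod_directSum_zmod (Additive ↥Q)
  haveI : ∀ i, NeZero (p i ^ e i) := fun i => ⟨pow_ne_zero _ (hp i).pos.ne'⟩
  haveI : Finite (DirectSum ι fun i => ZMod (p i ^ e i)) := by
    haveI : ∀ i, Fintype (ZMod (p i ^ e i)) := fun i => ZMod.fintype _
    exact Finite.of_equiv _ DFinsupp.equivFunOnFintype.symm
  -- the hom from `P` to the finite torsion part
  let F : ↥P →* Multiplicative (DirectSum ι fun i => ZMod (p i ^ e i)) :=
    AddMonoidHom.toMultiplicativeRight
      ((AddMonoidHom.snd _ _).comp (f.toAddMonoidHom.comp (MonoidHom.toAdditive r)))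
  -- its kernel has finite index in `P`
  refine ⟨F.ker.map P.subtype, Subgroup.map_subtype_le F.ker, ?_, ?_⟩
  · have hKP : (F.ker.map P.subtype).subgroupOf P = F.ker := by
      rw [Subgroup.subgroupOf, Subgroup.comap_map_eq_self_of_injective P.subtype_injective]
    rw [Subgroup.relIndex, hKP, Subgroup.index_ker]
    haveI : Finite F.range := Subgroup.instFiniteSubtypeMem _
    exact Nat.card_ne_zero.mpr ⟨⟨1⟩, this⟩
  · intro H hH hHfin hfree
    rw [Subgroup.eq_bot_iff_forall]
    intro h hh
    by_contra hne
    -- `h` has no fixed point, hence `q h ≠ 1`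
    have hker : h ∉ q.ker := fun hk => by
      obtain ⟨z, hz⟩ := hq h hk
      exact hfree h hh hne z hz
    obtain ⟨h', hh'K, rfl⟩ := hH hh
    have hFh : (f (Additive.ofMul (r h'))).2 = 0 := hh'K
    -- `h` has finite order
    have hord : ∃ m : ℕ, 0 < m ∧ (P.subtype h') ^ m = 1 := by
      have : IsOfFinOrder (⟨P.subtype h', hh⟩ : H) := isOfFinOrder_of_finite _
      obtain ⟨m, hm, hm1⟩ := isOfFinOrder_iff_pow_eq_one.mp this
      exact ⟨m, hm, congrArg Subtype.val hm1⟩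
    obtain ⟨m, hm, hpow⟩ := hord
    -- the image of `h'` in `Q` is torsion with zero torsion-coordinate, hence trivial
    set x := f (Additive.ofMul (r h')) with hx
    have hx2 : x.2 = 0 := hFh
    have hrm : (r h') ^ m = 1 := by
      ext
      show (q.comp P.subtype) h' ^ m = 1
      rw [← map_pow]
      simpa using congrArg q hpow
    have hxm : m • x = 0 := by
      rw [hx, ← map_nsmul, ← ofMul_pow, hrm, ofMul_one, map_zero]
    have hx1 : x.1 = 0 := by
      have h1 : m • x.1 = 0 := congrArg Prod.fst hxm
      ext a
      have h2 := congrArg (fun v => v a) h1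
      simp only [Finsupp.smul_apply, Finsupp.coe_zero, Pi.zero_apply, smul_eq_mul] at h2
      have h3 : (m : ℤ) * x.1 a = 0 := by exact_mod_cast h2
      rcases mul_eq_zero.mp h3 with h | h
      · exact absurd (by exact_mod_cast h) hm.ne'
      · simpa using h
    have hx0 : x = 0 := Prod.ext hx1 hx2
    have h4 : Additive.ofMul (r h') = 0 := f.injective (by rw [map_zero, ← hx, hx0])
    have hr1 : r h' = 1 := ofMul_eq_zero.mp h4
    exact hker (congrArg Subtype.val hr1)
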